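/- Let n be a positive integer, a = (a_1,...,a_n) and b = (b_1,...,b_n) be n-tuples of complex numbers with b_k ≠ 0 for all k, and p = (p_1,...,p_n) nonnegative real weights with ∑_{i=1}^n p_i = 1. Let γ, Γ ∈ ℂ satisfy Re(Γ · conj(γ)) > 0 and Γ ≠ γ, and suppose |a_k/conj(b_k) - (γ + Γ)/2| ≤ (1/2)|Γ - γ| for every k ∈ {1,...,n}. Then (∑_{k=1}^n p_k |a_k|^2)(∑_{k=1}^n p_k |b_k|^2) ≤ (1/(4 Re(Γ conj(γ)))) · ( Re[ (conj(γ) + conj(Γ)) ∑_{k=1}^n p_k a_k b_k ] )^2 ≤ (|Γ + γ|^2/(4 Re(Γ conj(γ)))) · | ∑_{k=1}^n p_k a_k b_k |^2. -/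

import Mathlib

open Complex

lemma key_pt (a b γ Γ : ℂ) (hb : b ≠ 0)
    (h : ‖a / (starRingEnd ℂ) b - (γ + Γ) / 2‖ ≤ (1 / 2) * ‖Γ - γ‖) :
    ‖a‖ ^ 2 + (Γ * (starRingEnd ℂ) γ).re * ‖b‖ ^ 2
      ≤ (((starRingEnd ℂ) γ + (starRingEnd ℂ) Γ) * a * b).re := by
  have hcb : (starRingEnd ℂ) b ≠ 0 := by simpa using hb
  have h1 : ‖2 * a - (γ + Γ) * (starRingEnd ℂ) b‖
      ≤ ‖Γ - γ‖ * ‖b‖ := by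
    have := mul_le_mul_of_nonneg_right h (by positivity : (0:ℝ) ≤ 2 * ‖b‖)
    calc ‖2 * a - (γ + Γ) * (starRingEnd ℂ) b‖
        = ‖a / (starRingEnd ℂ) b - (γ + Γ) / 2‖ * (2 * ‖b‖) := by
          rw [show 2 * a - (γ + Γ) * (starRingEnd ℂ) b
              = (a / (starRingEnd ℂ) b - (γ + Γ) / 2) * (2 * (starRingEnd ℂ) b) by
            field_simp]
          simp [norm_mul, Complex.norm_conj, Complex.norm_two]
      _ ≤ (1 / 2) * ‖Γ - γ‖ * (2 * ‖b‖) := this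
      _ = ‖Γ - γ‖ * ‖b‖ := by ring
  have h2 : Complex.normSq (2 * a - (γ + Γ) * (starRingEnd ℂ) b)
      ≤ Complex.normSq (Γ - γ) * Complex.normSq b := by
    have := mul_self_le_mul_self (norm_nonneg _) h1
    simpa [← Complex.sq_norm, sq, mul_mul_mul_comm] using this
  have ha2 : ‖a‖ ^ 2 = Complex.normSq a := Complex.sq_norm a
  have hb2 : ‖b‖ ^ 2 = Complex.normSq b := Complex.sq_norm b
  rw [ha2, hb2]
  simp only [Complex.normSq_apply, Complex.mul_re, Complex.mul_im, Complex.sub_re,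
    Complex.sub_im, Complex.add_re, Complex.add_im, Complex.conj_re, Complex.conj_im,
    Complex.re_ofNat, Complex.im_ofNat] at h2 ⊢
  nlinarith [h2]

theorem stmt_7 (n : ℕ) (hn : 0 < n) (a b : Fin n → ℂ) (p : Fin n → ℝ)
    (hb : ∀ k, b k ≠ 0) (hp : ∀ k, 0 ≤ p k) (hp1 : ∑ i, p i = 1)
    (γ Γ : ℂ) (hΓγ : 0 < (Γ * (starRingEnd ℂ) γ).re) (hne : Γ ≠ γ)
    (h : ∀ k, ‖a k / (starRingEnd ℂ) (b k) - (γ + Γ) / 2‖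
        ≤ (1 / 2) * ‖Γ - γ‖) :
    (∑ k, p k * ‖a k‖ ^ 2) * (∑ k, p k * ‖b k‖ ^ 2)
      ≤ (1 / (4 * (Γ * (starRingEnd ℂ) γ).re))
        * ((((starRingEnd ℂ) γ + (starRingEnd ℂ) Γ) * ∑ k, (p k : ℂ) * a k * b k).re) ^ 2
    ∧ (1 / (4 * (Γ * (starRingEnd ℂ) γ).re))
        * ((((starRingEnd ℂ) γ + (starRingEnd ℂ) Γ) * ∑ k, (p k : ℂ) * a k * b k).re) ^ 2
      ≤ (‖Γ + γ‖ ^ 2 / (4 * (Γ * (starRingEnd ℂ) γ).re))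
        * ‖∑ k, (p k : ℂ) * a k * b k‖ ^ 2 := by
  set c : ℂ := (starRingEnd ℂ) γ + (starRingEnd ℂ) Γ with hc
  set S : ℂ := ∑ k, (p k : ℂ) * a k * b k with hS
  set A : ℝ := ∑ k, p k * ‖a k‖ ^ 2 with hA
  set B : ℝ := ∑ k, p k * ‖b k‖ ^ 2 with hB
  set m : ℝ := (Γ * (starRingEnd ℂ) γ).re with hm
  have hRe : (c * S).re = ∑ k, p k * (c * a k * b k).re := by
    rw [hS, Finset.mul_sum, Complex.re_sum]
    refine Finset.sum_congr rfl fun k _ => ?_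
    rw [show c * ((p k : ℂ) * a k * b k) = (p k : ℂ) * (c * a k * b k) by ring,
      Complex.re_ofReal_mul]
  have hkey : A + m * B ≤ (c * S).re := by
    rw [hRe, hA, hB, Finset.mul_sum, ← Finset.sum_add_distrib]
    refine Finset.sum_le_sum fun k _ => ?_
    have := key_pt (a k) (b k) γ Γ (hb k) (h k)
    calc p k * ‖a k‖ ^ 2 + m * (p k * ‖b k‖ ^ 2)
        = p k * (‖a k‖ ^ 2 + m * ‖b k‖ ^ 2) := by ring
      _ ≤ p k * (c * a k * b k).re := mul_le_mul_of_nonneg_left this (hp k)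
  have hAnn : 0 ≤ A := Finset.sum_nonneg fun k _ => mul_nonneg (hp k) (by positivity)
  have hBnn : 0 ≤ B := Finset.sum_nonneg fun k _ => mul_nonneg (hp k) (by positivity)
  have hRnn : 0 ≤ (c * S).re := le_trans (by nlinarith) hkey
  constructor
  · rw [div_mul_eq_mul_div, le_div_iff₀ (by positivity)]
    have hApB : 0 ≤ A + m * B := by nlinarith
    have hsq' : (A + m * B) * (A + m * B) ≤ (c * S).re * (c * S).re :=
      mul_self_le_mul_self hApB hkey
    nlinarith [sq_nonneg (A - m * B), hsq']
  · have habs : (c * S).re ≤ ‖Γ + γ‖ * ‖S‖ := by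
      have h1 : (c * S).re ≤ ‖c * S‖ := Complex.re_le_norm _
      have h2 : ‖c‖ = ‖Γ + γ‖ := by
        rw [hc, ← map_add, Complex.norm_conj, add_comm]
      rw [norm_mul, h2] at h1
      exact h1
    have hsq : (c * S).re ^ 2 ≤ (‖Γ + γ‖ * ‖S‖) ^ 2 :=
      pow_le_pow_left₀ hRnn habs 2
    calc (1 / (4 * m)) * (c * S).re ^ 2
        ≤ (1 / (4 * m)) * (‖Γ + γ‖ * ‖S‖) ^ 2 := by
          apply mul_le_mul_of_nonneg_left hsq; positivity
      _ = (‖Γ + γ‖ ^ 2 / (4 * m)) * ‖S‖ ^ 2 := by ring
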